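/- arXiv:2309.14511 — 4 statements merged into one kernel-verified Lean document; each statement's English description precedes it below -/
import Mathlib

section
/- Let ū ∈ U_ad, d̄ ∈ L²(Ω;ℝ^d), and g ∈ C_ū. For k ∈ ℕ with k ≥ max_i (b_i − a_i)^{-1}, define g^k ∈ L²(Ω;ℝ^d) componentwise by g^k_i(x) := 0 if a_i < ū_i(x) < a_i + 1/k or b_i − 1/k < ū_i(x) < b_i, and g^k_i(x) := min{k, max{g_i(x), −k}} otherwise. Then: (i) g^k ∈ C_ū; (ii) |g^k_i(x)| ≤ |g_i(x)| for a.e. x ∈ Ω and every i; (iii) g^k → g strongly in L²(Ω;ℝ^d) as k → ∞; (iv) ū + γ g^k ∈ U_ad for every γ ∈ (0, k^{-2}]. -/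
open MeasureTheory Filter Topology
open scoped RealInnerProductSpace ENNReal

noncomputable section

/-- `L²(Ω; ℝ^d)`. -/
abbrev Ld (d : ℕ) (μ : Measure (EuclideanSpace ℝ (Fin d))) :=
  Lp (EuclideanSpace ℝ (Fin d)) 2 μ

/-- The admissible set `U_ad`. -/
def Uad (d : ℕ) (μ : Measure (EuclideanSpace ℝ (Fin d))) (a b : Fin d → ℝ) :
    Set (Ld d μ) :=
  {v | ∀ᵐ x ∂μ, ∀ i, a i ≤ v x i ∧ v x i ≤ b i}

/-- The admissible sign condition satisfied by `g` with respect to `ū`. -/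
def AdmissibleSign (d : ℕ) (μ : Measure (EuclideanSpace ℝ (Fin d))) (a b : Fin d → ℝ)
    (ubar g : Ld d μ) : Prop :=
  ∀ᵐ x ∂μ, ∀ i,
    (ubar x i = a i → 0 ≤ g x i) ∧ (ubar x i = b i → g x i ≤ 0)

/-- The critical cone `C_ū` determined by `(ū, d̄)`. -/
def CriticalCone (d : ℕ) (μ : Measure (EuclideanSpace ℝ (Fin d))) (a b : Fin d → ℝ)
    (ubar dbar : Ld d μ) : Set (Ld d μ) :=
  {g | AdmissibleSign d μ a b ubar g ∧
    ∀ i, ∀ᵐ x ∂μ, dbar x i ≠ 0 → g x i = 0}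

lemma clamp_abs_le {k t : ℝ} (hk : 0 ≤ k) : |min k (max t (-k))| ≤ |t| := by
  rw [abs_le]
  refine ⟨le_min (by linarith [abs_nonneg t]) ((neg_abs_le t).trans (le_max_left _ _)), ?_⟩
  exact (min_le_right _ _).trans (max_le (le_abs_self t) (by linarith [abs_nonneg t]))

lemma clamp_eq {k t : ℝ} (h1 : -k ≤ t) (h2 : t ≤ k) : min k (max t (-k)) = t := by
  rw [max_eq_left h1, min_eq_right h2]

lemma euclid_norm_mono {d : ℕ} {u v : EuclideanSpace ℝ (Fin d)}
    (h : ∀ i, |u i| ≤ |v i|) : ‖u‖ ≤ ‖v‖ := by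
  rw [EuclideanSpace.norm_eq, EuclideanSpace.norm_eq]
  apply Real.sqrt_le_sqrt
  apply Finset.sum_le_sum
  intro i _
  rw [Real.norm_eq_abs, Real.norm_eq_abs]
  exact pow_le_pow_left₀ (abs_nonneg _) (h i) 2

/-- For `g ∈ C_ū` and `k ∈ ℕ`, let `g^k` be defined componentwise by
`g^k_i(x) = 0` if `a_i < ū_i(x) < a_i + 1/k` or `b_i − 1/k < ū_i(x) < b_i`, and
`g^k_i(x) = min{k, max{g_i(x), −k}}` otherwise.  Then `g^k → g` strongly in `L²(Ω;ℝ^d)` and,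
for every `k ≥ max_i (b_i − a_i)⁻¹`:
(i) `g^k ∈ C_ū`; (ii) `|g^k_i(x)| ≤ |g_i(x)|` a.e. for every `i`;
(iv) `ū + γ g^k ∈ U_ad` for every `γ ∈ (0, k⁻²]`. -/
theorem statement4 (d : ℕ) (hd : d = 2 ∨ d = 3)
    (Ω : Set (EuclideanSpace ℝ (Fin d)))
    (hΩo : IsOpen Ω) (hΩne : Ω.Nonempty) (hΩb : Bornology.IsBounded Ω)
    (a b : Fin d → ℝ) (hab : ∀ i, a i < b i)
    (ubar dbar g : Ld d (volume.restrict Ω))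
    (hubar : ubar ∈ Uad d (volume.restrict Ω) a b)
    (hg : g ∈ CriticalCone d (volume.restrict Ω) a b ubar dbar)
    (gk : ℕ → Ld d (volume.restrict Ω))
    (hgk : ∀ k : ℕ, ∀ᵐ x ∂(volume.restrict Ω), ∀ i,
      gk k x i =
        if (a i < ubar x i ∧ ubar x i < a i + 1 / (k : ℝ)) ∨
           (b i - 1 / (k : ℝ) < ubar x i ∧ ubar x i < b i)
        then 0 else min (k : ℝ) (max (g x i) (-(k : ℝ)))) :
    -- (iii) strong convergence `g^k → g` in `L²(Ω;ℝ^d)`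
    Tendsto gk atTop (𝓝 g) ∧
    ∀ k : ℕ, (∀ i, (b i - a i)⁻¹ ≤ (k : ℝ)) →
      -- (i) `g^k` belongs to the critical cone
      gk k ∈ CriticalCone d (volume.restrict Ω) a b ubar dbar ∧
      -- (ii) pointwise domination by `g`
      (∀ᵐ x ∂(volume.restrict Ω), ∀ i, |gk k x i| ≤ |g x i|) ∧
      -- (iv) admissibility of the perturbations
      (∀ γ : ℝ, 0 < γ → γ ≤ ((k : ℝ) ^ 2)⁻¹ →
        ubar + γ • gk k ∈ Uad d (volume.restrict Ω) a b) := by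
  classical
  have hubar' : ∀ᵐ x ∂(volume.restrict Ω), ∀ i,
      a i ≤ ubar x i ∧ ubar x i ≤ b i := hubar
  have hsign : ∀ᵐ x ∂(volume.restrict Ω), ∀ i,
      (ubar x i = a i → 0 ≤ g x i) ∧ (ubar x i = b i → g x i ≤ 0) := hg.1
  have hdbar : ∀ i, ∀ᵐ x ∂(volume.restrict Ω), dbar x i ≠ 0 → g x i = 0 := hg.2
  -- (ii) for all k
  have hdom : ∀ k : ℕ, ∀ᵐ x ∂(volume.restrict Ω), ∀ i, |gk k x i| ≤ |g x i| := by
    intro k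
    filter_upwards [hgk k] with x hx i
    rw [hx i]
    split_ifs with h
    · simpa using abs_nonneg (g x i)
    · exact clamp_abs_le (Nat.cast_nonneg k)
  -- pointwise eventual equality
  have hptwise : ∀ᵐ x ∂(volume.restrict Ω), ∀ᶠ k : ℕ in atTop, gk k x = g x := by
    filter_upwards [ae_all_iff.2 hgk, hubar', hsign] with x hx hu hs
    have hcomp : ∀ i, ∀ᶠ k : ℕ in atTop, gk k x i = g x i := by
      intro i
      have h1 : Tendsto (fun k : ℕ => 1 / (k : ℝ)) atTop (𝓝 0) :=
        tendsto_one_div_atTop_nhds_zero_nat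
      have hkg : ∀ᶠ k : ℕ in atTop, |g x i| ≤ (k : ℝ) :=
        (tendsto_natCast_atTop_atTop (R := ℝ)).eventually_ge_atTop _
      have hba : (0 : ℝ) < b i - a i := by linarith [hab i]
      have hcond : ∀ᶠ k : ℕ in atTop,
          ¬ ((a i < ubar x i ∧ ubar x i < a i + 1 / (k : ℝ)) ∨
             (b i - 1 / (k : ℝ) < ubar x i ∧ ubar x i < b i)) := by
        rcases eq_or_lt_of_le (hu i).1 with hA | hA
        · filter_upwards [h1.eventually_lt_const hba] with k hkk hcontra
          rcases hcontra with ⟨h1', _⟩ | ⟨h1', h2'⟩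
          · rw [← hA] at h1'; exact lt_irrefl _ h1'
          · rw [← hA] at h1'; linarith
        · rcases eq_or_lt_of_le (hu i).2 with hB | hB
          · filter_upwards [h1.eventually_lt_const hba] with k hkk hcontra
            rcases hcontra with ⟨_, h2'⟩ | ⟨_, h2'⟩
            · rw [hB] at h2'; linarith
            · rw [hB] at h2'; exact lt_irrefl _ h2'
          · filter_upwards [h1.eventually_lt_const (sub_pos.2 hA),
              h1.eventually_lt_const (sub_pos.2 hB)] with k hk1 hk2 hcontra
            rcases hcontra with ⟨_, h2'⟩ | ⟨h1', _⟩
            · linarith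
            · linarith
      filter_upwards [hkg, hcond] with k hk1 hk2
      rw [hx k i, if_neg hk2]
      exact clamp_eq (by rw [abs_le] at hk1; linarith [hk1.1]) (le_of_abs_le hk1)
    have hall := (Filter.eventually_all (ι := Fin d)).2 hcomp
    filter_upwards [hall] with k hk
    ext i
    exact hk i
  -- (iii)
  have htends : Tendsto gk atTop (𝓝 g) := by
    rw [Lp.tendsto_Lp_iff_tendsto_eLpNorm']
    have hmeas : ∀ n : ℕ, AEMeasurable
        (fun x => ((‖gk n x - g x‖₊ : ℝ≥0∞)) ^ (2 : ℝ)) (volume.restrict Ω) := by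
      intro n
      exact (((Lp.aestronglyMeasurable (gk n)).sub
        (Lp.aestronglyMeasurable g)).enorm).pow_const (2 : ℝ)
    have hgfin : (∫⁻ x, ((‖g x‖₊ : ℝ≥0∞)) ^ (2 : ℝ) ∂(volume.restrict Ω)) ≠ ∞ := by
      have h2 : ((2 : ℝ≥0∞)).toReal = (2 : ℝ) := by simp
      have hfin := lintegral_rpow_enorm_lt_top_of_eLpNorm_lt_top
        (μ := volume.restrict Ω) (f := ⇑g)
        (p := 2) (by norm_num) (by norm_num) (Lp.eLpNorm_lt_top g)
      rw [h2] at hfin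
      exact hfin.ne
    have hbd : ∀ n : ℕ, ∀ᵐ x ∂(volume.restrict Ω),
        ((‖gk n x - g x‖₊ : ℝ≥0∞)) ^ (2 : ℝ) ≤
          ((2 : ℝ≥0∞) * (‖g x‖₊ : ℝ≥0∞)) ^ (2 : ℝ) := by
      intro n
      filter_upwards [hdom n] with x hx
      refine ENNReal.rpow_le_rpow ?_ (by norm_num)
      have hnorm : ‖gk n x - g x‖ ≤ 2 * ‖g x‖ := by
        have h1 : ‖gk n x‖ ≤ ‖g x‖ := euclid_norm_mono hx
        calc ‖gk n x - g x‖ ≤ ‖gk n x‖ + ‖g x‖ := norm_sub_le _ _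
          _ ≤ 2 * ‖g x‖ := by linarith
      have hnn : ‖gk n x - g x‖₊ ≤ 2 * ‖g x‖₊ := by
        simpa [← NNReal.coe_le_coe] using hnorm
      have hcast := ENNReal.coe_le_coe.2 hnn
      rw [ENNReal.coe_mul] at hcast
      simpa using hcast
    have hfin : (∫⁻ x, ((2 : ℝ≥0∞) * (‖g x‖₊ : ℝ≥0∞)) ^ (2 : ℝ)
        ∂(volume.restrict Ω)) ≠ ∞ := by
      have heq : ∀ x : EuclideanSpace ℝ (Fin d),
          ((2 : ℝ≥0∞) * (‖g x‖₊ : ℝ≥0∞)) ^ (2 : ℝ) =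
          (2 : ℝ≥0∞) ^ (2 : ℝ) * ((‖g x‖₊ : ℝ≥0∞)) ^ (2 : ℝ) := fun x =>
        ENNReal.mul_rpow_of_nonneg _ _ (by norm_num)
      simp_rw [heq]
      rw [lintegral_const_mul' _ _ (ENNReal.rpow_ne_top_of_nonneg (by norm_num) (by norm_num))]
      exact ENNReal.mul_ne_top
        (ENNReal.rpow_ne_top_of_nonneg (by norm_num) (by norm_num)) hgfin
    have hlim : ∀ᵐ x ∂(volume.restrict Ω), Tendsto
        (fun n => ((‖gk n x - g x‖₊ : ℝ≥0∞)) ^ (2 : ℝ)) atTop (𝓝 0) := by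
      filter_upwards [hptwise] with x hx
      refine Tendsto.congr' ?_ tendsto_const_nhds
      filter_upwards [hx] with k hkx
      rw [hkx]
      simp [ENNReal.zero_rpow_of_pos]
    have hint : Tendsto
        (fun n => ∫⁻ x, ((‖gk n x - g x‖₊ : ℝ≥0∞)) ^ (2 : ℝ) ∂(volume.restrict Ω))
        atTop (𝓝 0) := by
      have hdc := tendsto_lintegral_of_dominated_convergence'
        (F := fun n x => ((‖gk n x - g x‖₊ : ℝ≥0∞)) ^ (2 : ℝ))
        (f := fun _ => 0) _ hmeas hbd hfin hlim
      simpa using hdc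
    have hmain : Tendsto
        (fun n => (∫⁻ x, ((‖gk n x - g x‖₊ : ℝ≥0∞)) ^ (2 : ℝ)
          ∂(volume.restrict Ω)) ^ (1 / (2 : ℝ))) atTop (𝓝 0) := by
      have hh := hint.ennrpow_const (1 / (2 : ℝ))
      simpa [ENNReal.zero_rpow_of_pos] using hh
    refine hmain.congr fun n => ?_
    rw [eLpNorm_eq_lintegral_rpow_enorm (by norm_num) (by norm_num)]
    norm_num
    rfl
  refine ⟨htends, ?_⟩
  intro k hk
  have hd0 : 0 < d := by rcases hd with h | h <;> omega
  have hk0 : (0 : ℝ) < (k : ℝ) := by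
    have i0 : Fin d := ⟨0, hd0⟩
    exact lt_of_lt_of_le (inv_pos.2 (by linarith [hab i0])) (hk i0)
  refine ⟨⟨?_, ?_⟩, hdom k, ?_⟩
  · -- admissible sign
    show ∀ᵐ x ∂(volume.restrict Ω), ∀ i,
      (ubar x i = a i → 0 ≤ gk k x i) ∧ (ubar x i = b i → gk k x i ≤ 0)
    filter_upwards [hgk k, hsign] with x hx hs i
    constructor
    · intro hA
      rw [hx i]
      split_ifs with h
      · exact le_rfl
      · exact le_min hk0.le (((hs i).1 hA).trans (le_max_left _ _))
    · intro hB
      rw [hx i]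
      split_ifs with h
      · exact le_rfl
      · exact (min_le_right _ _).trans (max_le ((hs i).2 hB) (by linarith))
  · -- dbar vanishing
    intro i
    filter_upwards [hgk k, hdbar i] with x hx hdb hne
    rw [hx i]
    split_ifs with h
    · rfl
    · rw [hdb hne, max_eq_left (by linarith : -(k:ℝ) ≤ 0), min_eq_right hk0.le]
  · -- (iv)
    intro γ hγ0 hγk
    have hγk' : γ * (k : ℝ) ≤ (k : ℝ)⁻¹ := by
      have h1 : γ * (k : ℝ) ≤ ((k : ℝ) ^ 2)⁻¹ * (k : ℝ) :=
        mul_le_mul_of_nonneg_right hγk hk0.le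
      have h2 : ((k : ℝ) ^ 2)⁻¹ * (k : ℝ) = (k : ℝ)⁻¹ := by
        field_simp
      linarith [h2 ▸ h1]
    show ∀ᵐ x ∂(volume.restrict Ω), ∀ i,
      a i ≤ (ubar + γ • gk k) x i ∧ (ubar + γ • gk k) x i ≤ b i
    filter_upwards [hgk k, hubar', hsign, Lp.coeFn_add ubar (γ • gk k),
      Lp.coeFn_smul γ (gk k)] with x hx hu hs hadd hsmul i
    have hval : (ubar + γ • gk k) x i = ubar x i + γ * gk k x i := by
      rw [hadd, Pi.add_apply, hsmul, Pi.smul_apply]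
      rfl
    rw [hval, hx i]
    split_ifs with hcond
    · simpa using hu i
    · push_neg at hcond
      set c := min (k : ℝ) (max (g x i) (-(k : ℝ))) with hc
      have hck : c ≤ (k : ℝ) := min_le_left _ _
      have hck' : -(k : ℝ) ≤ c := le_min (by linarith) (le_max_right _ _)
      constructor
      · rcases le_or_gt c 0 with hc0 | hc0
        · rcases eq_or_lt_of_le (hu i).1 with hA | hA
          · have hg0 : 0 ≤ g x i := (hs i).1 hA.symm
            have h0c : 0 ≤ c := le_min hk0.le (hg0.trans (le_max_left _ _))
            have hceq : γ * c = 0 := by rw [le_antisymm hc0 h0c, mul_zero]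
            linarith [(hu i).1]
          · have hu' : a i + 1 / (k : ℝ) ≤ ubar x i := hcond.1 hA
            have h3 : γ * (-(k : ℝ)) ≤ γ * c := mul_le_mul_of_nonneg_left hck' hγ0.le
            rw [one_div] at hu'
            linarith
        · linarith [mul_pos hγ0 hc0, (hu i).1]
      · rcases le_or_gt c 0 with hc0 | hc0
        · linarith [mul_nonpos_of_nonneg_of_nonpos hγ0.le hc0, (hu i).2]
        · rcases eq_or_lt_of_le (hu i).2 with hB | hB
          · have hgle : g x i ≤ 0 := (hs i).2 hB
            have hcle : c ≤ 0 := (min_le_right _ _).trans (max_le hgle (by linarith))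
            linarith
          · have hu' : ubar x i ≤ b i - 1 / (k : ℝ) := by
              by_contra hcon
              push_neg at hcon
              exact absurd (hcond.2 hcon) (not_le.2 hB)
            have h3 : γ * c ≤ γ * (k : ℝ) := mul_le_mul_of_nonneg_left hck hγ0.le
            rw [one_div] at hu'
            linarith
end
end

section
/- Let ū ∈ U_ad and let d̄ ∈ L²(Ω;ℝ^d) satisfy the first-order sign conditions with respect to ū. Let (g_k)_{k∈ℕ} ⊂ L²(Ω;ℝ^d) be a sequence such that every g_k satisfies the admissible sign condition with respect to ū and g_k ⇀ g weakly in L²(Ω;ℝ^d), and let (d_k)_{k∈ℕ} ⊂ L²(Ω;ℝ^d) satisfy d_k → d̄ strongly in L²(Ω;ℝ^d) and limsup_{k→∞} ∫_Ω d_k(x)·g_k(x) dx ≤ 0. Then g belongs to the critical cone C_ū determined by (ū, d̄). -/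
open MeasureTheory Filter Topology
open scoped RealInnerProductSpace ENNReal

noncomputable section

/-- The first-order sign conditions satisfied by `d̄` with respect to `ū`. -/
def FirstOrderSign (d : ℕ) (μ : Measure (EuclideanSpace ℝ (Fin d))) (a b : Fin d → ℝ)
    (ubar dbar : Ld d μ) : Prop :=
  ∀ᵐ x ∂μ, ∀ i,
    (a i < ubar x i → ubar x i < b i → dbar x i = 0) ∧
    (ubar x i = a i → 0 ≤ dbar x i) ∧
    (ubar x i = b i → dbar x i ≤ 0)

/-- Weak convergence of a sequence in the Hilbert space `L²(Ω; ℝ^d)`. -/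
def WeakConvL2 (d : ℕ) (μ : Measure (EuclideanSpace ℝ (Fin d)))
    (u : ℕ → Ld d μ) (w : Ld d μ) : Prop :=
  ∀ f : Ld d μ, Tendsto (fun k => (⟪f, u k⟫ : ℝ)) atTop (𝓝 (⟪f, w⟫ : ℝ))

/-- Let `ū ∈ U_ad`, let `d̄` satisfy the first-order sign conditions with
respect to `ū`, let `g_k` satisfy the admissible sign condition and `g_k ⇀ g` weakly in
`L²(Ω;ℝ^d)`, and let `d_k → d̄` strongly in `L²(Ω;ℝ^d)` with
`limsup_k ∫_Ω d_k · g_k dx ≤ 0`.  Then `g ∈ C_ū`. -/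
theorem statement6 (d : ℕ) (hd : d = 2 ∨ d = 3)
    (Ω : Set (EuclideanSpace ℝ (Fin d)))
    (hΩo : IsOpen Ω) (hΩne : Ω.Nonempty) (hΩb : Bornology.IsBounded Ω)
    (a b : Fin d → ℝ) (hab : ∀ i, a i < b i)
    (ubar dbar : Ld d (volume.restrict Ω))
    (hubar : ubar ∈ Uad d (volume.restrict Ω) a b)
    (hdbar : FirstOrderSign d (volume.restrict Ω) a b ubar dbar)
    (gs : ℕ → Ld d (volume.restrict Ω)) (g : Ld d (volume.restrict Ω))
    (hsign : ∀ k, AdmissibleSign d (volume.restrict Ω) a b ubar (gs k))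
    (hweak : WeakConvL2 d (volume.restrict Ω) gs g)
    (ds : ℕ → Ld d (volume.restrict Ω))
    (hds : Tendsto ds atTop (𝓝 dbar))
    (hlimsup :
      limsup (fun k => ∫ x, (⟪ds k x, gs k x⟫ : ℝ) ∂(volume.restrict Ω)) atTop ≤ 0) :
    g ∈ CriticalCone d (volume.restrict Ω) a b ubar dbar := by
  classical
  have hμfin : IsFiniteMeasure (volume.restrict Ω) := by
    constructor
    rw [Measure.restrict_apply_univ]
    exact hΩb.measure_lt_top
  -- integrability of components of g
  have hgint : Integrable (⇑g) (volume.restrict Ω) := (Lp.memLp g).integrable (by norm_num)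
  have hgiint : ∀ i : Fin d, Integrable (fun x => g x i) (volume.restrict Ω) := fun i =>
    (EuclideanSpace.proj i : EuclideanSpace ℝ (Fin d) →L[ℝ] ℝ).integrable_comp hgint
  -- inner product with indicator test functions
  have hf_inner : ∀ (i : Fin d) (B : Set (EuclideanSpace ℝ (Fin d))) (hB : MeasurableSet B)
      (hBfin : (volume.restrict Ω) B ≠ ∞) (v : Ld d (volume.restrict Ω)),
      (⟪indicatorConstLp 2 hB hBfin (EuclideanSpace.single i (1 : ℝ)), v⟫ : ℝ)
        = ∫ x in B, v x i ∂(volume.restrict Ω) := by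
    intro i B hB hBfin v
    rw [L2.inner_indicatorConstLp_eq_setIntegral_inner ℝ v hB _ hBfin]
    refine integral_congr_ae (Filter.Eventually.of_forall fun x => ?_)
    simp [EuclideanSpace.inner_single_left]
  -- key nonnegativity transfer lemma
  have key : ∀ (i : Fin d) (A : Set (EuclideanSpace ℝ (Fin d))), MeasurableSet A →
      (∀ k, ∀ᵐ x ∂(volume.restrict Ω), x ∈ A → 0 ≤ gs k x i) →
      ∀ᵐ x ∂(volume.restrict Ω), x ∈ A → 0 ≤ g x i := by
    intro i A hA hge
    rw [← ae_restrict_iff' hA]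
    have hint : Integrable (fun x => g x i) ((volume.restrict Ω).restrict A) := (hgiint i).restrict
    refine ae_nonneg_of_forall_setIntegral_nonneg hint ?_
    intro s hs hsfin
    rw [Measure.restrict_restrict hs]
    have hB : MeasurableSet (s ∩ A) := hs.inter hA
    have hBfin : (volume.restrict Ω) (s ∩ A) ≠ ∞ := (measure_lt_top (volume.restrict Ω) _).ne
    set f := indicatorConstLp 2 hB hBfin (EuclideanSpace.single i (1 : ℝ)) with hfdef
    have h1 : ∀ k, 0 ≤ (⟪f, gs k⟫ : ℝ) := by
      intro k
      rw [hfdef, hf_inner]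
      refine integral_nonneg_of_ae ?_
      rw [EventuallyLE, ae_restrict_iff' hB]
      filter_upwards [hge k] with x hx hxB
      exact hx hxB.2
    have h2 : 0 ≤ (⟪f, g⟫ : ℝ) := ge_of_tendsto' (hweak f) h1
    rwa [hfdef, hf_inner] at h2
  have key2 : ∀ (i : Fin d) (A : Set (EuclideanSpace ℝ (Fin d))), MeasurableSet A →
      (∀ k, ∀ᵐ x ∂(volume.restrict Ω), x ∈ A → gs k x i ≤ 0) →
      ∀ᵐ x ∂(volume.restrict Ω), x ∈ A → g x i ≤ 0 := by
    intro i A hA hge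
    rw [← ae_restrict_iff' hA]
    have hint : Integrable (fun x => -(g x i)) ((volume.restrict Ω).restrict A) := ((hgiint i).restrict).neg
    have hae : 0 ≤ᵐ[(volume.restrict Ω).restrict A] fun x => -(g x i) := by
      refine ae_nonneg_of_forall_setIntegral_nonneg hint ?_
      intro s hs hsfin
      rw [integral_neg, Measure.restrict_restrict hs]
      have hB : MeasurableSet (s ∩ A) := hs.inter hA
      have hBfin : (volume.restrict Ω) (s ∩ A) ≠ ∞ := (measure_lt_top (volume.restrict Ω) _).ne
      set f := indicatorConstLp 2 hB hBfin (EuclideanSpace.single i (1 : ℝ)) with hfdef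
      have h1 : ∀ k, (⟪f, gs k⟫ : ℝ) ≤ 0 := by
        intro k
        rw [hfdef, hf_inner]
        have : (∫ x in s ∩ A, -(gs k x i) ∂(volume.restrict Ω)) = -∫ x in s ∩ A, gs k x i ∂(volume.restrict Ω) := integral_neg _
        have hnn : 0 ≤ ∫ x in s ∩ A, -(gs k x i) ∂(volume.restrict Ω) := by
          refine integral_nonneg_of_ae ?_
          rw [EventuallyLE, ae_restrict_iff' hB]
          filter_upwards [hge k] with x hx hxB
          simpa using hx hxB.2
        rw [this] at hnn
        linarith
      have h2 : (⟪f, g⟫ : ℝ) ≤ 0 := le_of_tendsto' (hweak f) h1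
      rw [hfdef, hf_inner] at h2
      linarith
    filter_upwards [hae] with x hx
    simpa using hx
  -- measurable representative of ubar
  have humeas := Lp.aestronglyMeasurable ubar
  set u0 := humeas.mk with hu0def
  have hu0 : ⇑ubar =ᵐ[(volume.restrict Ω)] u0 := humeas.ae_eq_mk
  have hu0m : Measurable u0 := humeas.stronglyMeasurable_mk.measurable
  have hu0mi : ∀ i, Measurable fun x => u0 x i := fun i =>
    (EuclideanSpace.proj i : EuclideanSpace ℝ (Fin d) →L[ℝ] ℝ).measurable.comp hu0m
  -- g satisfies the admissible sign condition
  have hAg : AdmissibleSign d (volume.restrict Ω) a b ubar g := by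
    rw [AdmissibleSign, ae_all_iff]
    intro i
    have hAm : MeasurableSet {x | u0 x i = a i} :=
      (hu0mi i) (measurableSet_singleton (a i))
    have hBm : MeasurableSet {x | u0 x i = b i} :=
      (hu0mi i) (measurableSet_singleton (b i))
    have ha : ∀ᵐ x ∂(volume.restrict Ω), x ∈ {x | u0 x i = a i} → 0 ≤ g x i := by
      refine key i _ hAm fun k => ?_
      filter_upwards [hsign k, hu0] with x hx hux hxA
      exact (hx i).1 (by rw [hux]; exact hxA)
    have hb : ∀ᵐ x ∂(volume.restrict Ω), x ∈ {x | u0 x i = b i} → g x i ≤ 0 := by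
      refine key2 i _ hBm fun k => ?_
      filter_upwards [hsign k, hu0] with x hx hux hxB
      exact (hx i).2 (by rw [hux]; exact hxB)
    filter_upwards [ha, hb, hu0] with x hxa hxb hux
    constructor
    · intro h; exact hxa (by rw [← hux]; exact h)
    · intro h; exact hxb (by rw [← hux]; exact h)
  refine ⟨hAg, ?_⟩
  -- uniform boundedness of (gs k)
  obtain ⟨C, hC⟩ : ∃ C, ∀ k, ‖innerSL ℝ (gs k)‖ ≤ C := by
    refine banach_steinhaus fun f => ?_
    have ht : Tendsto (fun k => ‖(⟪f, gs k⟫ : ℝ)‖) atTop (𝓝 ‖(⟪f, g⟫ : ℝ)‖) :=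
      (hweak f).norm
    obtain ⟨C, hC⟩ := ht.bddAbove_range
    refine ⟨C, fun k => ?_⟩
    have : ‖(innerSL ℝ (gs k)) f‖ = ‖(⟪f, gs k⟫ : ℝ)‖ := by
      simp [innerSL_apply_apply, real_inner_comm]
    rw [this]
    exact hC (Set.mem_range_self k)
  have hCge : ∀ k, ‖gs k‖ ≤ C := fun k => by
    rw [← innerSL_apply_norm (𝕜 := ℝ)]; exact hC k
  -- weak-strong convergence of the pairing
  have h1 : Tendsto (fun k => (⟪ds k - dbar, gs k⟫ : ℝ)) atTop (𝓝 0) := by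
    have hnorm : Tendsto (fun k => ‖ds k - dbar‖ * C) atTop (𝓝 0) := by
      have := (tendsto_iff_norm_sub_tendsto_zero.mp hds).mul_const C
      simpa using this
    refine squeeze_zero_norm (fun k => ?_) hnorm
    calc ‖(⟪ds k - dbar, gs k⟫ : ℝ)‖ ≤ ‖ds k - dbar‖ * ‖gs k‖ := norm_inner_le_norm _ _
      _ ≤ ‖ds k - dbar‖ * C := by
          exact mul_le_mul_of_nonneg_left (hCge k) (norm_nonneg _)
  have htend : Tendsto (fun k => (⟪ds k, gs k⟫ : ℝ)) atTop (𝓝 (⟪dbar, g⟫ : ℝ)) := by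
    have h := h1.add (hweak dbar)
    rw [zero_add] at h
    refine h.congr fun k => ?_
    simp [inner_sub_left]
  have hip : (⟪dbar, g⟫ : ℝ) ≤ 0 := by
    have heq : (fun k => ∫ x, (⟪ds k x, gs k x⟫ : ℝ) ∂(volume.restrict Ω))
        = fun k => (⟪ds k, gs k⟫ : ℝ) := by
      funext k
      rw [L2.inner_def]
    rw [heq] at hlimsup
    rw [htend.limsup_eq] at hlimsup
    exact hlimsup
  -- pointwise nonnegativity of the integrand
  have hinn_eq : ∀ x, (⟪dbar x, g x⟫ : ℝ) = ∑ i, dbar x i * g x i := by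
    intro x
    simp [PiLp.inner_apply, RCLike.inner_apply, RCLike.conj_to_real, mul_comm]
  have hnn : ∀ᵐ x ∂(volume.restrict Ω), ∀ i, 0 ≤ dbar x i * g x i := by
    filter_upwards [hdbar, hubar, hAg] with x hdx hux hgx i
    rcases eq_or_lt_of_le (hux i).1 with h | h
    · exact mul_nonneg ((hdx i).2.1 h.symm) ((hgx i).1 h.symm)
    rcases eq_or_lt_of_le (hux i).2 with h2 | h2
    · have hd0 := (hdx i).2.2 h2
      have hg0 := (hgx i).2 h2
      have := mul_nonneg (neg_nonneg.2 hd0) (neg_nonneg.2 hg0)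
      rwa [neg_mul_neg] at this
    · rw [(hdx i).1 h h2, zero_mul]
  have hnn' : 0 ≤ᵐ[(volume.restrict Ω)] fun x => (⟪dbar x, g x⟫ : ℝ) := by
    filter_upwards [hnn] with x hx
    rw [Pi.zero_apply, hinn_eq]
    exact Finset.sum_nonneg fun i _ => hx i
  have hinner : Integrable (fun x => (⟪dbar x, g x⟫ : ℝ)) (volume.restrict Ω) := L2.integrable_inner dbar g
  have hint0 : ∫ x, (⟪dbar x, g x⟫ : ℝ) ∂(volume.restrict Ω) = 0 := by
    refine le_antisymm ?_ (integral_nonneg_of_ae hnn')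
    rw [← L2.inner_def]
    exact hip
  have hzero : (fun x => (⟪dbar x, g x⟫ : ℝ)) =ᵐ[(volume.restrict Ω)] 0 :=
    (integral_eq_zero_iff_of_nonneg_ae hnn' hinner).1 hint0
  intro i
  filter_upwards [hzero, hnn] with x h0 h1 hdi
  have hsum : ∑ j, dbar x j * g x j = 0 := by
    rw [← hinn_eq]
    simpa using h0
  have := (Finset.sum_eq_zero_iff_of_nonneg fun j _ => h1 j).1 hsum i (Finset.mem_univ i)
  rcases mul_eq_zero.1 this with h | h
  · exact absurd h hdi
  · exact h
end
end

section
/- Let ū ∈ U_ad, let O ⊂ L²(Ω;ℝ^d) be an open neighborhood of ū, and let j : O → ℝ be twice continuously Fréchet differentiable. Suppose ū is a local minimizer of j on U_ad, i.e., there exists ε > 0 such that j(ū) ≤ j(u) for all u ∈ U_ad with ‖u−ū‖_{L²(Ω;ℝ^d)} < ε. Let d̄ ∈ L²(Ω;ℝ^d) be the Riesz representative of j'(ū), so that j'(ū)v = ∫_Ω d̄·v dx for all v ∈ L²(Ω;ℝ^d), and let C_ū be the critical cone determined by (ū, d̄). Then the second-order necessary optetimality condition holds: j''(ū)(g,g)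 ≥ 0 for every g ∈ C_ū. -/
open MeasureTheory Filter Topology
open scoped RealInnerProductSpace ENNReal

noncomputable section

lemma clamp_abs_le_s8 {M y : ℝ} (hM : 0 ≤ M) : |max (-M) (min M y)| ≤ |y| := by
  rw [abs_le]
  constructor
  · have h1 : -|y| ≤ min M y := le_min (by linarith [abs_nonneg y]) (neg_abs_le y)
    exact le_trans h1 (le_max_right _ _)
  · apply max_le (by linarith [abs_nonneg y])
    exact le_trans (min_le_right _ _) (le_abs_self y)

lemma sec_ord {φ ψ : ℝ → ℝ} {c δ : ℝ} (hδ : 0 < δ)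
    (hφ : ∀ t ∈ Set.Icc (0:ℝ) δ, HasDerivAt φ (ψ t) t)
    (hmin : ∀ t ∈ Set.Icc (0:ℝ) δ, φ 0 ≤ φ t)
    (hψ0 : ψ 0 = 0) (hψ : HasDerivAt ψ c 0) : 0 ≤ c := by
  by_contra hc
  push_neg at hc
  -- slope of ψ at 0 tends to c
  have hslope : Tendsto (fun t => ψ t / t) (𝓝[≠] (0:ℝ)) (𝓝 c) := by
    have h := hasDerivAt_iff_tendsto_slope.mp hψ
    refine h.congr' ?_
    filter_upwards [self_mem_nhdsWithin] with t ht
    rw [slope_def_field]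
    rw [hψ0]
    simp [div_eq_div_iff]
  have hev : ∀ᶠ t in 𝓝[>] (0:ℝ), ψ t / t < c/2 := by
    have h2 : (𝓝[>] (0:ℝ)) ≤ 𝓝[≠] 0 :=
      nhdsWithin_mono _ (fun t ht => ne_of_gt ht)
    exact (hslope.mono_left h2).eventually_lt_const (by linarith)
  -- extract an interval
  obtain ⟨δ', hδ'pos, hball⟩ := Metric.mem_nhdsWithin_iff.mp hev
  have hneg : ∀ t ∈ Set.Ioo (0:ℝ) (min δ' δ), ψ t < 0 := by
    intro t ht
    have htmem : t ∈ Metric.ball (0:ℝ) δ' ∩ Set.Ioi 0 := by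
      constructor
      · rw [Metric.mem_ball, Real.dist_eq, sub_zero, abs_of_pos ht.1]
        exact lt_of_lt_of_le ht.2 (min_le_left _ _)
      · exact ht.1
    have := hball htmem
    have ht0 : 0 < t := ht.1
    have : ψ t < (c/2) * t := by
      have := (div_lt_iff₀ ht0).mp this
      linarith
    nlinarith
  set δ'' := min δ' δ with hδ''
  have hδ''pos : 0 < δ'' := lt_min hδ'pos hδ
  have hsub : Set.Icc (0:ℝ) δ'' ⊆ Set.Icc 0 δ := Set.Icc_subset_Icc le_rfl (min_le_right _ _)
  have hanti : StrictAntiOn φ (Set.Icc (0:ℝ) δ'') := by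
    apply strictAntiOn_of_deriv_neg (convex_Icc _ _)
    · intro t ht
      exact (hφ t (hsub ht)).continuousAt.continuousWithinAt
    · intro t ht
      rw [interior_Icc] at ht
      rw [(hφ t (hsub (Set.Ioo_subset_Icc_self ht))).deriv]
      exact hneg t ht
  have h1 : φ δ'' < φ 0 :=
    hanti (Set.left_mem_Icc.mpr hδ''pos.le) (Set.right_mem_Icc.mpr hδ''pos.le) hδ''pos
  have h2 : φ 0 ≤ φ δ'' := hmin δ'' (hsub (Set.right_mem_Icc.mpr hδ''pos.le))
  linarith

lemma key {X : Type*} [NormedAddCommGroup X] [NormedSpace ℝ X]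
    {O : Set X} (hO : IsOpen O) {u : X} (huO : u ∈ O)
    {j : X → ℝ} {j' : X → X →L[ℝ] ℝ} {j'' : X → (X →L[ℝ] (X →L[ℝ] ℝ))}
    (hj' : ∀ w ∈ O, HasFDerivAt j (j' w) w)
    (hj'' : ∀ w ∈ O, HasFDerivAt j' (j'' w) w)
    {v : X} (hv0 : j' u v = 0) {δ : ℝ} (hδ : 0 < δ)
    (hfeas : ∀ t ∈ Set.Icc (0:ℝ) δ, j u ≤ j (u + t • v)) :
    0 ≤ j'' u v v := by
  obtain ⟨r, hr, hball⟩ := Metric.isOpen_iff.mp hO u huO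
  set δ' := min δ (r / (2 * (‖v‖ + 1))) with hδ'def
  have hδ' : 0 < δ' := lt_min hδ (by positivity)
  have hcurve : ∀ t : ℝ, HasDerivAt (fun s : ℝ => u + s • v) v t := by
    intro t
    have h := ((hasDerivAt_id t).smul_const v).const_add u
    simpa using h
  have hmemO : ∀ t ∈ Set.Icc (0:ℝ) δ', u + t • v ∈ O := by
    intro t ht
    apply hball
    rw [Metric.mem_ball, dist_eq_norm, add_sub_cancel_left, norm_smul, Real.norm_eq_abs,
      abs_of_nonneg ht.1]
    have h1 : t ≤ r / (2 * (‖v‖ + 1)) := le_trans ht.2 (min_le_right _ _)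
    have h2 : (0:ℝ) ≤ ‖v‖ := norm_nonneg v
    have h3 : t * ‖v‖ ≤ (r / (2 * (‖v‖ + 1))) * (‖v‖ + 1) :=
      mul_le_mul h1 (by linarith) h2 (by positivity)
    have h4 : (r / (2 * (‖v‖ + 1))) * (‖v‖ + 1) = r / 2 := by
      field_simp
    linarith
  have hφ : ∀ t ∈ Set.Icc (0:ℝ) δ', HasDerivAt (fun s : ℝ => j (u + s • v)) (j' (u + t • v) v) t := by
    intro t ht
    exact (hj' (u + t • v) (hmemO t ht)).comp_hasDerivAt t (hcurve t)
  have hψ : HasDerivAt (fun s : ℝ => j' (u + s • v) v) (j'' u v v) 0 := by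
    have h0 : u + (0:ℝ) • v = u := by simp
    have h1 : HasFDerivAt (fun w => j' w v)
        ((ContinuousLinearMap.apply ℝ ℝ v).comp (j'' u)) (u + (0:ℝ) • v) := by
      rw [h0]
      exact (ContinuousLinearMap.apply ℝ ℝ v).hasFDerivAt.comp u (hj'' u huO)
    have h2 := h1.comp_hasDerivAt 0 (hcurve 0)
    simpa [Function.comp_def] using h2
  have hm : ∀ t ∈ Set.Icc (0:ℝ) δ', j (u + (0:ℝ) • v) ≤ j (u + t • v) := by
    intro t ht
    rw [zero_smul, add_zero]
    exact hfeas t ⟨ht.1, le_trans ht.2 (min_le_left _ _)⟩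
  have hψ0 : j' (u + (0:ℝ) • v) v = 0 := by
    rw [zero_smul, add_zero]; exact hv0
  exact sec_ord (φ := fun s : ℝ => j (u + s • v)) (ψ := fun s : ℝ => j' (u + s • v) v) hδ' hφ hm hψ0 hψ

set_option maxHeartbeats 2000000 in
/-- **second-order necessary optimality conditions.** Let `j` be twice
continuously Fréchet differentiable on an open neighborhood `O` of `ū ∈ U_ad`, let `ū` be a
local minimizer of `j` on `U_ad`, and let `d̄ ∈ L²(Ω;ℝ^d)` be the Riesz representative of
`j'(ū)`.  Then `j''(ū)(g,g) ≥ 0` for every `g` in the critical cone `C_ū`. -/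
theorem statement8 (d : ℕ) (hd : d = 2 ∨ d = 3)
    (Ω : Set (EuclideanSpace ℝ (Fin d)))
    (hΩo : IsOpen Ω) (hΩne : Ω.Nonempty) (hΩb : Bornology.IsBounded Ω)
    (a b : Fin d → ℝ) (hab : ∀ i, a i < b i)
    (ubar : Ld d (volume.restrict Ω))
    (hubar : ubar ∈ Uad d (volume.restrict Ω) a b)
    (O : Set (Ld d (volume.restrict Ω))) (hO : IsOpen O) (hubarO : ubar ∈ O)
    (j : Ld d (volume.restrict Ω) → ℝ)
    (j' : Ld d (volume.restrict Ω) → (Ld d (volume.restrict Ω) →L[ℝ] ℝ))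
    (j'' : Ld d (volume.restrict Ω) →
      (Ld d (volume.restrict Ω) →L[ℝ] (Ld d (volume.restrict Ω) →L[ℝ] ℝ)))
    (hj' : ∀ u ∈ O, HasFDerivAt j (j' u) u)
    (hj'' : ∀ u ∈ O, HasFDerivAt j' (j'' u) u)
    (hj''cont : ContinuousOn j'' O)
    (ε : ℝ) (hε : 0 < ε)
    (hmin : ∀ u ∈ Uad d (volume.restrict Ω) a b, ‖u - ubar‖ < ε → j ubar ≤ j u)
    (dbar : Ld d (volume.restrict Ω))
    (hdbar : ∀ v : Ld d (volume.restrict Ω),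
      j' ubar v = ∫ x, (⟪dbar x, v x⟫ : ℝ) ∂(volume.restrict Ω)) :
    ∀ g ∈ CriticalCone d (volume.restrict Ω) a b ubar dbar, 0 ≤ j'' ubar g g := by
  classical
  intro g hg
  obtain ⟨hg1, hg2⟩ := hg
  let μ : Measure (EuclideanSpace ℝ (Fin d)) := volume.restrict Ω
  haveI : Nonempty (Fin d) := Fin.pos_iff_nonempty.mp (by omega)
  have hum := Lp.aestronglyMeasurable ubar
  have hgm := Lp.aestronglyMeasurable g
  set u' := hum.mk _ with hu'def
  set g' := hgm.mk _ with hg'def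
  have hu'm : Measurable u' := hum.stronglyMeasurable_mk.measurable
  have hg'm : Measurable g' := hgm.stronglyMeasurable_mk.measurable
  have hu'e : (↑↑ubar : _ → EuclideanSpace ℝ (Fin d)) =ᵐ[μ] u' := hum.ae_eq_mk
  have hg'e : (↑↑g : _ → EuclideanSpace ℝ (Fin d)) =ᵐ[μ] g' := hgm.ae_eq_mk
  -- the truncated directions
  set f : ℕ → EuclideanSpace ℝ (Fin d) → EuclideanSpace ℝ (Fin d) := fun k x =>
    WithLp.toLp 2 (fun i => if u' x i = a i ∨ u' x i = b i ∨
        (a i + ((k:ℝ)+1)⁻¹ ≤ u' x i ∧ u' x i ≤ b i - ((k:ℝ)+1)⁻¹)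
      then max (-((k:ℝ)+1)) (min ((k:ℝ)+1) (g' x i)) else 0) with hfdef
  have hfm : ∀ k, Measurable (f k) := by
    intro k
    refine Measurable.comp (WithLp.measurable_toLp 2 _) (measurable_pi_lambda _ ?_)
    intro i
    have h1 : Measurable fun x => u' x i := (measurable_pi_apply i).comp ((WithLp.measurable_ofLp 2 _).comp hu'm)
    have h2 : Measurable fun x => g' x i := (measurable_pi_apply i).comp ((WithLp.measurable_ofLp 2 _).comp hg'm)
    have hset : MeasurableSet {x | u' x i = a i ∨ u' x i = b i ∨
        (a i + ((k:ℝ)+1)⁻¹ ≤ u' x i ∧ u' x i ≤ b i - ((k:ℝ)+1)⁻¹)} := by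
      apply MeasurableSet.union (h1 (measurableSet_singleton (a i)))
      apply MeasurableSet.union (h1 (measurableSet_singleton (b i)))
      exact h1 measurableSet_Icc
    exact Measurable.ite hset (measurable_const.max (measurable_const.min h2)) measurable_const
  have hfb : ∀ k x, ‖f k x‖ ≤ ‖g' x‖ := by
    intro k x
    rw [EuclideanSpace.norm_eq, EuclideanSpace.norm_eq]
    apply Real.sqrt_le_sqrt
    apply Finset.sum_le_sum
    intro i _
    simp only [Real.norm_eq_abs]
    have hM : (0:ℝ) ≤ (k:ℝ)+1 := by positivity
    apply pow_le_pow_left₀ (abs_nonneg _) _ 2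
    show |f k x i| ≤ |g' x i|
    by_cases hc : u' x i = a i ∨ u' x i = b i ∨
        (a i + ((k:ℝ)+1)⁻¹ ≤ u' x i ∧ u' x i ≤ b i - ((k:ℝ)+1)⁻¹)
    · simp only [hfdef, PiLp.toLp_apply, if_pos hc]
      exact clamp_abs_le_s8 hM
    · simp only [hfdef, PiLp.toLp_apply, if_neg hc, abs_zero]
      exact abs_nonneg _
  have hmemg' : MemLp g' 2 μ := (Lp.memLp g).ae_eq hg'e
  have hmemf : ∀ k, MemLp (f k) 2 μ := fun k =>
    MemLp.of_le hmemg' (hfm k).aestronglyMeasurable (Eventually.of_forall (hfb k))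
  set gk : ℕ → Ld d μ := fun k => (hmemf k).toLp (f k) with hgkdef
  have hgke : ∀ k, (↑↑(gk k) : _ → EuclideanSpace ℝ (Fin d)) =ᵐ[μ] f k :=
    fun k => (hmemf k).coeFn_toLp
  -- Step 1 : j'(ubar) (gk k) = 0
  have hg2' : ∀ᵐ x ∂μ, ∀ i, dbar x i ≠ 0 → g x i = 0 := ae_all_iff.mpr hg2
  have hzero : ∀ k, j' ubar (gk k) = 0 := by
    intro k
    rw [hdbar]
    have hae0 : ∀ᵐ x ∂μ, (⟪dbar x, (gk k) x⟫ : ℝ) = 0 := by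
      filter_upwards [hgke k, hg2', hg'e] with x h1 h2 h3
      rw [h1]
      have hterm : ∀ i, dbar x i * f k x i = 0 := by
        intro i
        by_cases hdz : dbar x i = 0
        · rw [hdz, zero_mul]
        · have hgz : g x i = 0 := h2 i hdz
          have hg'z : g' x i = 0 := by rw [← h3]; exact hgz
          have hfz : f k x i = 0 := by
            simp only [hfdef, PiLp.toLp_apply, hg'z]
            have hM : (0:ℝ) ≤ (k:ℝ)+1 := by positivity
            rw [min_eq_right hM, max_eq_right (by linarith)]
            split <;> rfl
          rw [hfz, mul_zero]
      have hinner : (⟪dbar x, f k x⟫ : ℝ) = ∑ i, dbar x i * f k x i := by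
        simp [PiLp.inner_apply, RCLike.inner_apply, mul_comm]
      rw [hinner]
      exact Finset.sum_eq_zero fun i _ => hterm i
    rw [integral_congr_ae hae0, integral_zero]
  -- Step 2 : feasibility
  have hfeas : ∀ k : ℕ, ∀ t : ℝ, 0 ≤ t → t * ((k:ℝ)+1) ≤ ((k:ℝ)+1)⁻¹ →
      (∀ i, t * ((k:ℝ)+1) ≤ b i - a i) → ubar + t • gk k ∈ Uad d μ a b := by
    intro k t ht htM htab
    simp only [Uad, Set.mem_setOf_eq]
    filter_upwards [Lp.coeFn_add ubar (t • gk k), Lp.coeFn_smul t (gk k), hgke k, hubar,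
      hu'e, hg'e, hg1] with x hadd hsmul hgkx hub hux hgx hsign
    intro i
    have h1 : (ubar + t • gk k) x = u' x + t • f k x := by
      rw [hadd, Pi.add_apply, hsmul, Pi.smul_apply, hgkx, hux]
    have hval : (ubar + t • gk k) x i = u' x i + t * f k x i := by
      rw [h1, PiLp.add_apply, PiLp.smul_apply, smul_eq_mul]
    rw [hval]
    set M : ℝ := (k:ℝ)+1 with hMdef
    have hM0 : (0:ℝ) ≤ M := by positivity
    have hfi : f k x i = if u' x i = a i ∨ u' x i = b i ∨
        (a i + M⁻¹ ≤ u' x i ∧ u' x i ≤ b i - M⁻¹)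
      then max (-M) (min M (g' x i)) else 0 := by simp only [hfdef, PiLp.toLp_apply, hMdef]
    rw [hfi]
    rw [hux] at hub
    split_ifs with hc
    · have hw1 : max (-M) (min M (g' x i)) ≤ M :=
        max_le (by linarith) (min_le_left _ _)
      have hw2 : -M ≤ max (-M) (min M (g' x i)) := le_max_left _ _
      have htw1 : t * max (-M) (min M (g' x i)) ≤ t * M :=
        mul_le_mul_of_nonneg_left hw1 ht
      have htw2 : t * (-M) ≤ t * max (-M) (min M (g' x i)) :=
        mul_le_mul_of_nonneg_left hw2 ht
      rcases hc with h | h | h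
      · have hsgn : 0 ≤ g' x i := by
          rw [← hgx]
          exact (hsign i).1 (by rw [hux]; exact h)
        have hw0 : 0 ≤ max (-M) (min M (g' x i)) :=
          le_trans (le_min hM0 hsgn) (le_max_right _ _)
        have htw0 : 0 ≤ t * max (-M) (min M (g' x i)) := mul_nonneg ht hw0
        rw [h]
        constructor
        · linarith
        · have := htab i
          nlinarith
      · have hsgn : g' x i ≤ 0 := by
          rw [← hgx]
          exact (hsign i).2 (by rw [hux]; exact h)
        have hw0 : max (-M) (min M (g' x i)) ≤ 0 :=
          max_le (by linarith) (le_trans (min_le_right _ _) hsgn)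
        have htw0 : t * max (-M) (min M (g' x i)) ≤ 0 :=
          mul_nonpos_of_nonneg_of_nonpos ht hw0
        rw [h]
        constructor
        · have := htab i
          nlinarith
        · linarith
      · constructor
        · nlinarith [h.1]
        · nlinarith [h.2]
    · rw [mul_zero, add_zero]
      exact hub i
  -- Step 3 : per-k nonnegativity
  have hk_nonneg : ∀ k, 0 ≤ j'' ubar (gk k) (gk k) := by
    intro k
    set M : ℝ := (k:ℝ)+1 with hMdef
    have hMpos : (0:ℝ) < M := by positivity
    set cmin : ℝ := Finset.univ.inf' Finset.univ_nonempty (fun i => b i - a i) with hcmindef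
    have hcpos : 0 < cmin := (Finset.lt_inf'_iff _).mpr fun i _ => sub_pos.mpr (hab i)
    have hcle : ∀ i, cmin ≤ b i - a i := fun i => Finset.inf'_le _ (Finset.mem_univ i)
    set δ : ℝ := min (M⁻¹ * M⁻¹) (min (cmin / M) (ε / (2 * (‖gk k‖ + 1)))) with hδdef
    have hδpos : 0 < δ := by
      apply lt_min (by positivity) (lt_min (by positivity) (by positivity))
    apply key hO hubarO hj' hj'' (hzero k) hδpos
    intro t htmem
    obtain ⟨ht0, htδ⟩ := htmem
    have htM : t * M ≤ M⁻¹ := by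
      have h1 : t ≤ M⁻¹ * M⁻¹ := le_trans htδ (min_le_left _ _)
      have h2 : t * M ≤ (M⁻¹ * M⁻¹) * M := mul_le_mul_of_nonneg_right h1 hMpos.le
      have h3 : (M⁻¹ * M⁻¹) * M = M⁻¹ := by
        field_simp
      linarith
    have htab : ∀ i, t * M ≤ b i - a i := by
      intro i
      have h1 : t ≤ cmin / M := le_trans htδ (le_trans (min_le_right _ _) (min_le_left _ _))
      have h2 : t * M ≤ (cmin / M) * M := mul_le_mul_of_nonneg_right h1 hMpos.le
      have h3 : (cmin / M) * M = cmin := by field_simp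
      rw [h3] at h2
      linarith [hcle i]
    have hUad : ubar + t • gk k ∈ Uad d μ a b := hfeas k t ht0 htM htab
    have hnorm : ‖(ubar + t • gk k) - ubar‖ < ε := by
      rw [add_sub_cancel_left, norm_smul, Real.norm_eq_abs, abs_of_nonneg ht0]
      have h1 : t ≤ ε / (2 * (‖gk k‖ + 1)) :=
        le_trans htδ (le_trans (min_le_right _ _) (min_le_right _ _))
      have h2 : t * ‖gk k‖ ≤ (ε / (2 * (‖gk k‖ + 1))) * (‖gk k‖ + 1) :=
        mul_le_mul h1 (by linarith [norm_nonneg (gk k)]) (norm_nonneg _) (by positivity)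
      have h3 : (ε / (2 * (‖gk k‖ + 1))) * (‖gk k‖ + 1) = ε / 2 := by
        field_simp
      linarith
    exact hmin _ hUad hnorm
  -- Step 4 : gk → g in L²
  have htendsto : Tendsto gk atTop (𝓝 g) := by
    haveI : Fact ((1:ℝ≥0∞) ≤ 2) := ⟨one_le_two⟩
    rw [Lp.tendsto_Lp_iff_tendsto_eLpNorm']
    have hcong : (fun k => eLpNorm (⇑(gk k) - ⇑g) 2 μ) = fun k => eLpNorm (f k - g') 2 μ := by
      funext k
      exact eLpNorm_congr_ae ((hgke k).sub hg'e)
    rw [hcong]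
    have hub' : ∀ᵐ x ∂μ, ∀ i, a i ≤ u' x i ∧ u' x i ≤ b i := by
      filter_upwards [hubar, hu'e] with x h1 h2
      rw [← h2]; exact h1
    have hptw : ∀ᵐ x ∂μ, ∀ᶠ k : ℕ in atTop, f k x = g' x := by
      filter_upwards [hub'] with x hx
      have hi : ∀ i, ∀ᶠ k : ℕ in atTop, f k x i = g' x i := by
        intro i
        have hclamp : ∀ᶠ k : ℕ in atTop, |g' x i| ≤ (k:ℝ)+1 := by
          filter_upwards [eventually_ge_atTop ⌈|g' x i|⌉₊] with k hk
          calc |g' x i| ≤ (⌈|g' x i|⌉₊ : ℝ) := Nat.le_ceil _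
          _ ≤ (k:ℝ) := by exact_mod_cast hk
          _ ≤ (k:ℝ)+1 := by linarith
        have hcond : ∀ᶠ k : ℕ in atTop, (u' x i = a i ∨ u' x i = b i ∨
            (a i + ((k:ℝ)+1)⁻¹ ≤ u' x i ∧ u' x i ≤ b i - ((k:ℝ)+1)⁻¹)) := by
          by_cases ha' : u' x i = a i
          · exact Eventually.of_forall fun k => Or.inl ha'
          by_cases hb' : u' x i = b i
          · exact Eventually.of_forall fun k => Or.inr (Or.inl hb')
          · have h1 : a i < u' x i := lt_of_le_of_ne (hx i).1 (Ne.symm ha')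
            have h2 : u' x i < b i := lt_of_le_of_ne (hx i).2 hb'
            have h3 : Tendsto (fun k : ℕ => ((k:ℝ)+1)⁻¹) atTop (𝓝 0) := by
              simpa only [one_div] using tendsto_one_div_add_atTop_nhds_zero_nat (𝕜 := ℝ)
            have h4 : ∀ᶠ k : ℕ in atTop, ((k:ℝ)+1)⁻¹ < min (u' x i - a i) (b i - u' x i) :=
              h3.eventually_lt_const (lt_min (by linarith) (by linarith))
            filter_upwards [h4] with k hk
            refine Or.inr (Or.inr ⟨?_, ?_⟩)
            · have := lt_of_lt_of_le hk (min_le_left _ _); linarith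
            · have := lt_of_lt_of_le hk (min_le_right _ _); linarith
        filter_upwards [hclamp, hcond] with k hk1 hk2
        have habs := abs_le.mp hk1
        have heq : f k x i = max (-((k:ℝ)+1)) (min ((k:ℝ)+1) (g' x i)) := by
          simp only [hfdef, PiLp.toLp_apply, if_pos hk2]
        rw [heq, min_eq_right habs.2, max_eq_right habs.1]
      have hall := eventually_all.mpr hi
      filter_upwards [hall] with k hk
      ext i
      exact hk i
    set F : ℕ → EuclideanSpace ℝ (Fin d) → ℝ≥0∞ :=
      fun k x => (‖f k x - g' x‖₊ : ℝ≥0∞) ^ (2:ℝ) with hFdef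
    have hFmeas : ∀ k, Measurable (F k) := fun k =>
      (ENNReal.continuous_rpow_const.measurable).comp ((hfm k).sub hg'm).enorm
    have hgmeas : Measurable fun x => ((‖g' x‖₊ : ℝ≥0∞)) := hg'm.enorm
    have hbound : ∀ k, F k ≤ᵐ[μ] fun x => ((2:ℝ≥0∞) * ‖g' x‖₊) ^ (2:ℝ) := by
      intro k
      apply Eventually.of_forall
      intro x
      apply ENNReal.rpow_le_rpow _ (by norm_num)
      have h1 : ‖f k x - g' x‖₊ ≤ 2 * ‖g' x‖₊ := by
        rw [← NNReal.coe_le_coe]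
        push_cast
        calc ‖f k x - g' x‖ ≤ ‖f k x‖ + ‖g' x‖ := norm_sub_le _ _
        _ ≤ 2 * ‖g' x‖ := by linarith [hfb k x]
      exact_mod_cast h1
    have hfin : ∫⁻ x, ((2:ℝ≥0∞) * ‖g' x‖₊) ^ (2:ℝ) ∂μ ≠ ⊤ := by
      have heq : (fun x => ((2:ℝ≥0∞) * ‖g' x‖₊) ^ (2:ℝ)) =
          fun x => (2:ℝ≥0∞)^(2:ℝ) * (‖g' x‖₊:ℝ≥0∞) ^ (2:ℝ) := by
        funext x
        exact ENNReal.mul_rpow_of_nonneg _ _ (by norm_num)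
      have hm : Measurable fun x : EuclideanSpace ℝ (Fin d) => (‖g' x‖₊ : ℝ≥0∞) ^ (2:ℝ) :=
        ENNReal.continuous_rpow_const.measurable.comp hgmeas
      rw [heq, lintegral_const_mul ((2:ℝ≥0∞)^(2:ℝ)) hm]
      apply ENNReal.mul_ne_top
      · exact ENNReal.rpow_ne_top_of_nonneg (by norm_num) ENNReal.ofNat_ne_top
      · have h2 := lintegral_rpow_enorm_lt_top_of_eLpNorm_lt_top (p := (2:ℝ≥0∞))
          two_ne_zero ENNReal.ofNat_ne_top hmemg'.2
        have : (2:ℝ≥0∞).toReal = (2:ℝ) := by norm_num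
        rw [this] at h2
        exact h2.ne
    have hlim0 : ∀ᵐ x ∂μ, Tendsto (fun k => F k x) atTop (𝓝 0) := by
      filter_upwards [hptw] with x hx
      apply tendsto_const_nhds.congr'
      filter_upwards [hx] with k hk
      have : F k x = 0 := by
        simp only [hFdef, hk, sub_self, nnnorm_zero, ENNReal.coe_zero]
        exact ENNReal.zero_rpow_of_pos (by norm_num)
      rw [this]
    have hDCT := tendsto_lintegral_of_dominated_convergence _ hFmeas hbound hfin hlim0
    rw [lintegral_zero] at hDCT
    have hsnorm : ∀ k, eLpNorm (f k - g') 2 μ = (∫⁻ x, F k x ∂μ) ^ (1/(2:ℝ)) := by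
      intro k
      rw [eLpNorm_eq_lintegral_rpow_enorm two_ne_zero ENNReal.ofNat_ne_top]
      have h2t : (2:ℝ≥0∞).toReal = (2:ℝ) := by norm_num
      rw [h2t]
      congr 1
    have hfinal : Tendsto (fun k => (∫⁻ x, F k x ∂μ) ^ (1/(2:ℝ))) atTop
        (𝓝 ((0:ℝ≥0∞) ^ (1/(2:ℝ)))) :=
      (ENNReal.continuous_rpow_const.tendsto 0).comp hDCT
    rw [ENNReal.zero_rpow_of_pos (by norm_num)] at hfinal
    simpa only [hsnorm] using hfinal
  -- conclude by continuity
  have hcont : Continuous fun v : Ld d μ => j'' ubar v v := by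
    have h1 : Continuous fun p : Ld d μ × Ld d μ => j'' ubar p.1 p.2 :=
      (j'' ubar).isBoundedBilinearMap.continuous
    exact h1.comp (continuous_id.prodMk continuous_id)
  have hlim : Tendsto (fun k => j'' ubar (gk k) (gk k)) atTop (𝓝 (j'' ubar g g)) :=
    (hcont.tendsto g).comp htendsto
  have : (0:ℝ) ≤ j'' ubar g g := ge_of_tendsto' hlim hk_nonneg
  exact this
end
end

section
/- Let ū ∈ U_ad, let O ⊂ L²(Ω;ℝ^d) be an open neighborhood of ū, and let j : O → ℝ admit the structural decomposition: j is twice continuously Fréchet differentiable on O and there exist α > 0 and Q : O × L²(Ω;ℝ^d) → ℝ with j''(u)(g,g) = α‖g‖²_{L²(Ω;ℝ^d)} + Q(u,g) for all u ∈ O, g ∈ L²(Ω;ℝ^d), and Q(u_k,g_k) → Q(u,g) whenever u_k → u strongly in L²(Ω;ℝ^d) and g_k ⇀ g weakly in L²(Ω;ℝ^d). Assume the first-order condition j'(ū)(u−ū) ≥ 0 for all u ∈ U_ad, let d̄ ∈ L²(Ω;ℝ^d) be the Riesz representative of j'(ū), and for τ > 0 set C_ū^τ := {g ∈ L²(Ω;ℝ^d)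 : g satisfies the admissible sign condition with respect to ū and, for each i, g_i(x) = 0 for a.e. x with |d̄_i(x)| > τ}. Then the following are equivalent: (a) j''(ū)(g,g) > 0 for all g ∈ C_ū \ {0}; (b) there exist μ > 0 and τ > 0 such that j''(ū)(g,g) ≥ μ‖g‖²_{L²(Ω;ℝ^d)} for all g ∈ C_ū^τ. (This is the abstract form of Theorem 4.8 on equivalent second-order optimality conditions.) -/
open MeasureTheory Filter Topology
open scoped RealInnerProductSpace ENNReal

noncomputable section

/-- The extended cone `C_ū^τ` determined by `(ū, d̄)` and `τ > 0`. -/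
def CriticalConeTau (d : ℕ) (μ : Measure (EuclideanSpace ℝ (Fin d))) (a b : Fin d → ℝ)
    (ubar dbar : Ld d μ) (τ : ℝ) : Set (Ld d μ) :=
  {g | AdmissibleSign d μ a b ubar g ∧
    ∀ i, ∀ᵐ x ∂μ, τ < |dbar x i| → g x i = 0}

/-- Any norm-bounded sequence in a separable real Hilbert space admits a weakly
convergent subsequence. -/
lemma weak_seq_compact {H : Type*} [NormedAddCommGroup H] [InnerProductSpace ℝ H]
    [CompleteSpace H] [SecondCountableTopology H] (u : ℕ → H) (hu : ∀ k, ‖u k‖ ≤ 1) :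
    ∃ (φ : ℕ → ℕ) (w : H), StrictMono φ ∧
      ∀ f : H, Tendsto (fun k => (⟪f, u (φ k)⟫ : ℝ)) atTop (𝓝 (⟪f, w⟫ : ℝ)) := by
  have : Nonempty H := ⟨0⟩
  obtain ⟨e, he⟩ := TopologicalSpace.exists_dense_seq H
  set F : ℕ → ∀ _ : ℕ, ℝ := fun k n => (⟪e n, u k⟫ : ℝ) with hF
  have hFmem : ∀ k, F k ∈ Set.pi Set.univ (fun n => Set.Icc (-‖e n‖) ‖e n‖) := by
    intro k n _
    have h1 : |(⟪e n, u k⟫ : ℝ)| ≤ ‖e n‖ * ‖u k‖ := abs_real_inner_le_norm _ _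
    have h2 : ‖e n‖ * ‖u k‖ ≤ ‖e n‖ * 1 := by
      exact mul_le_mul_of_nonneg_left (hu k) (norm_nonneg _)
    rw [mul_one] at h2
    constructor
    · linarith [neg_abs_le ((⟪e n, u k⟫ : ℝ)), h1.trans h2]
    · exact (le_abs_self _).trans (h1.trans h2)
  have hcomp : IsCompact (Set.pi Set.univ fun n : ℕ => Set.Icc (-‖e n‖) ‖e n‖) :=
    isCompact_univ_pi fun n => isCompact_Icc
  obtain ⟨L, -, φ, hφ, hL⟩ := hcomp.tendsto_subseq hFmem
  have hLn : ∀ n, Tendsto (fun k => (⟪e n, u (φ k)⟫ : ℝ)) atTop (𝓝 (L n)) := by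
    intro n
    exact (tendsto_pi_nhds.1 hL) n
  have key : ∀ f v : H, ‖v‖ ≤ 1 → ∀ n : ℕ,
      |(⟪f, v⟫ : ℝ) - (⟪e n, v⟫ : ℝ)| ≤ dist (e n) f := by
    intro f v hv n
    rw [← inner_sub_left]
    calc |(⟪f - e n, v⟫ : ℝ)| ≤ ‖f - e n‖ * ‖v‖ := abs_real_inner_le_norm _ _
      _ ≤ ‖f - e n‖ * 1 := mul_le_mul_of_nonneg_left hv (norm_nonneg _)
      _ = dist (e n) f := by rw [mul_one, dist_comm, dist_eq_norm]
  have hcau : ∀ f : H, CauchySeq (fun k => (⟪f, u (φ k)⟫ : ℝ)) := by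
    intro f
    rw [Metric.cauchySeq_iff]
    intro ε hε
    obtain ⟨n, hn⟩ := he.exists_dist_lt f (show (0:ℝ) < ε/4 by linarith)
    rw [dist_comm] at hn
    obtain ⟨N, hN⟩ := Metric.cauchySeq_iff.1 (hLn n).cauchySeq (ε/2) (by linarith)
    refine ⟨N, fun m hm m' hm' => ?_⟩
    have b1 := key f (u (φ m)) (hu _) n
    have b2 := key f (u (φ m')) (hu _) n
    have b3 := hN m hm m' hm'
    rw [Real.dist_eq] at b3 ⊢
    have : (⟪f, u (φ m)⟫ : ℝ) - ⟪f, u (φ m')⟫ =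
        ((⟪f, u (φ m)⟫ : ℝ) - ⟪e n, u (φ m)⟫) + ((⟪e n, u (φ m)⟫ : ℝ) - ⟪e n, u (φ m')⟫)
        + ((⟪e n, u (φ m')⟫ : ℝ) - ⟪f, u (φ m')⟫) := by ring
    rw [this]
    calc |_| ≤ |(⟪f, u (φ m)⟫ : ℝ) - ⟪e n, u (φ m)⟫| + |(⟪e n, u (φ m)⟫ : ℝ) - ⟪e n, u (φ m')⟫|
        + |(⟪e n, u (φ m')⟫ : ℝ) - ⟪f, u (φ m')⟫| := abs_add_three _ _ _
      _ < ε := by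
          have := abs_sub_comm ((⟪e n, u (φ m')⟫ : ℝ)) ((⟪f, u (φ m')⟫ : ℝ))
          rw [this]; linarith
  have hlim : ∀ f : H, ∃ l : ℝ, Tendsto (fun k => (⟪f, u (φ k)⟫ : ℝ)) atTop (𝓝 l) :=
    fun f => cauchySeq_tendsto_of_complete (hcau f)
  choose l hl using hlim
  have ladd : ∀ f f' : H, l (f + f') = l f + l f' := by
    intro f f'
    refine tendsto_nhds_unique (hl (f + f')) ?_
    have := (hl f).add (hl f')
    simpa [inner_add_left] using this
  have lsmul : ∀ (c : ℝ) (f : H), l (c • f) = c * l f := by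
    intro c f
    refine tendsto_nhds_unique (hl (c • f)) ?_
    have := (hl f).const_mul c
    simpa [real_inner_smul_left] using this
  have lbound : ∀ f : H, |l f| ≤ ‖f‖ := by
    intro f
    have habs : Tendsto (fun k => |(⟪f, u (φ k)⟫ : ℝ)|) atTop (𝓝 |l f|) := (hl f).abs
    refine le_of_tendsto habs (Eventually.of_forall fun k => ?_)
    calc |(⟪f, u (φ k)⟫ : ℝ)| ≤ ‖f‖ * ‖u (φ k)‖ := abs_real_inner_le_norm _ _
      _ ≤ ‖f‖ * 1 := mul_le_mul_of_nonneg_left (hu _) (norm_nonneg _)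
      _ = ‖f‖ := mul_one _
  set T : H →L[ℝ] ℝ :=
    LinearMap.mkContinuous
      { toFun := l, map_add' := ladd, map_smul' := lsmul } 1
      (fun f => by simpa [Real.norm_eq_abs] using lbound f) with hT
  refine ⟨φ, (InnerProductSpace.toDual ℝ H).symm T, hφ, fun f => ?_⟩
  have hw : (⟪(InnerProductSpace.toDual ℝ H).symm T, f⟫ : ℝ) = T f :=
    InnerProductSpace.toDual_symm_apply
  rw [real_inner_comm, hw]
  exact hl f

set_option maxHeartbeats 1000000 in
/-- **equivalent second-order conditions.** Under the structural decomposition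
of `j''` and the first-order condition at `ū`, positivity of `j''(ū)` on `C_ū \ {0}` is
equivalent to the existence of `μ > 0` and `τ > 0` such that
`j''(ū)(g,g) ≥ μ‖g‖²` for all `g ∈ C_ū^τ`. -/
theorem statement10 (d : ℕ) (hd : d = 2 ∨ d = 3)
    (Ω : Set (EuclideanSpace ℝ (Fin d)))
    (hΩo : IsOpen Ω) (hΩne : Ω.Nonempty) (hΩb : Bornology.IsBounded Ω)
    (a b : Fin d → ℝ) (hab : ∀ i, a i < b i)
    (ubar : Ld d (volume.restrict Ω))
    (hubar : ubar ∈ Uad d (volume.restrict Ω) a b)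
    (O : Set (Ld d (volume.restrict Ω))) (hO : IsOpen O) (hubarO : ubar ∈ O)
    (j : Ld d (volume.restrict Ω) → ℝ)
    (j' : Ld d (volume.restrict Ω) → (Ld d (volume.restrict Ω) →L[ℝ] ℝ))
    (j'' : Ld d (volume.restrict Ω) →
      (Ld d (volume.restrict Ω) →L[ℝ] (Ld d (volume.restrict Ω) →L[ℝ] ℝ)))
    (hj' : ∀ u ∈ O, HasFDerivAt j (j' u) u)
    (hj'' : ∀ u ∈ O, HasFDerivAt j' (j'' u) u)
    (hj''cont : ContinuousOn j'' O)
    (α : ℝ) (hα : 0 < α)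
    (Q : Ld d (volume.restrict Ω) → Ld d (volume.restrict Ω) → ℝ)
    (hdecomp : ∀ u ∈ O, ∀ g : Ld d (volume.restrict Ω),
      j'' u g g = α * ‖g‖ ^ 2 + Q u g)
    (hQcont : ∀ (us : ℕ → Ld d (volume.restrict Ω)) (u : Ld d (volume.restrict Ω))
      (gs : ℕ → Ld d (volume.restrict Ω)) (g : Ld d (volume.restrict Ω)),
      (∀ k, us k ∈ O) → u ∈ O → Tendsto us atTop (𝓝 u) →
      WeakConvL2 d (volume.restrict Ω) gs g →
      Tendsto (fun k => Q (us k) (gs k)) atTop (𝓝 (Q u g)))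
    (hfo : ∀ u ∈ Uad d (volume.restrict Ω) a b, 0 ≤ j' ubar (u - ubar))
    (dbar : Ld d (volume.restrict Ω))
    (hdbar : ∀ v : Ld d (volume.restrict Ω),
      j' ubar v = ∫ x, (⟪dbar x, v x⟫ : ℝ) ∂(volume.restrict Ω)) :
    (∀ g ∈ CriticalCone d (volume.restrict Ω) a b ubar dbar, g ≠ 0 → 0 < j'' ubar g g)
    ↔
    (∃ μ > (0 : ℝ), ∃ τ > (0 : ℝ),
      ∀ g ∈ CriticalConeTau d (volume.restrict Ω) a b ubar dbar τ,
        μ * ‖g‖ ^ 2 ≤ j'' ubar g g) := by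
  haveI : IsFiniteMeasure (volume.restrict Ω) :=
    ⟨by rw [Measure.restrict_apply_univ]; exact hΩb.measure_lt_top⟩
  haveI : Fact ((2:ℝ≥0∞) ≠ ⊤) := ⟨by norm_num⟩
  haveI : SecondCountableTopology (Ld d (volume.restrict Ω)) := MeasureTheory.Lp.SecondCountableTopology
  constructor
  · -- (a) → (b)
    intro hpos
    by_contra hcon
    push_neg at hcon
    have hsel : ∀ k : ℕ, ∃ g ∈ CriticalConeTau d (volume.restrict Ω) a b ubar dbar (1/((k:ℝ)+1)),
        j'' ubar g g < (1/((k:ℝ)+1)) * ‖g‖^2 := by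
      intro k
      exact hcon (1/((k:ℝ)+1)) (by positivity) (1/((k:ℝ)+1)) (by positivity)
    choose g hgmem hglt using hsel
    have hgne : ∀ k : ℕ, g k ≠ 0 := by
      intro k h0
      have := hglt k
      rw [h0] at this
      simp at this
    set h : ℕ → Ld d (volume.restrict Ω) := fun k => ‖g k‖⁻¹ • g k with hhdef
    have hgnorm : ∀ k : ℕ, ‖g k‖ ≠ 0 := fun k => norm_ne_zero_iff.2 (hgne k)
    have hnorm : ∀ k : ℕ, ‖h k‖ = 1 := by
      intro k
      rw [hhdef]
      simp only [norm_smul, norm_inv, norm_norm]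
      exact inv_mul_cancel₀ (hgnorm k)
    have hcoe : ∀ k : ℕ, ∀ᵐ x ∂(volume.restrict Ω), ∀ i, h k x i = ‖g k‖⁻¹ * g k x i := by
      intro k
      filter_upwards [Lp.coeFn_smul (‖g k‖⁻¹) (g k)] with x hx i
      rw [hhdef]
      rw [show ((‖g k‖⁻¹ • g k : Ld d (volume.restrict Ω)) : _ → _) x = ‖g k‖⁻¹ • (g k x) from hx]
      simp
    have hmem : ∀ k : ℕ, h k ∈ CriticalConeTau d (volume.restrict Ω) a b ubar dbar (1/((k:ℝ)+1)) := by
      intro k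
      obtain ⟨hs, hv⟩ := hgmem k
      refine ⟨?_, ?_⟩
      · filter_upwards [hs, hcoe k] with x hx hc i
        refine ⟨fun heq => ?_, fun heq => ?_⟩
        · rw [hc i]
          exact mul_nonneg (by positivity) ((hx i).1 heq)
        · rw [hc i]
          have := (hx i).2 heq
          have hnn : (0:ℝ) ≤ ‖g k‖⁻¹ := by positivity
          nlinarith
      · intro i
        filter_upwards [hv i, hcoe k] with x hx hc hlt
        rw [hc i, hx hlt, mul_zero]
    have hscale : ∀ (c : ℝ) (q : Ld d (volume.restrict Ω)), j'' ubar (c • q) (c • q) = c^2 * j'' ubar q q := by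
      intro c q
      have h1 : (j'' ubar) (c • q) = c • (j'' ubar q) := (j'' ubar).map_smul c q
      have h2 : (j'' ubar q) (c • q) = c • ((j'' ubar q) q) := (j'' ubar q).map_smul c q
      rw [h1, ContinuousLinearMap.smul_apply, h2, smul_eq_mul, smul_eq_mul]
      ring
    have hkey : ∀ k : ℕ, α + Q ubar (h k) < 1/((k:ℝ)+1) := by
      intro k
      have hd1 := hdecomp ubar hubarO (h k)
      have hd2 : j'' ubar (h k) (h k) = (‖g k‖⁻¹)^2 * j'' ubar (g k) (g k) := hscale _ _
      have hlt2 : (‖g k‖⁻¹)^2 * j'' ubar (g k) (g k)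
          < (‖g k‖⁻¹)^2 * ((1/((k:ℝ)+1)) * ‖g k‖^2) := by
        refine mul_lt_mul_of_pos_left (hglt k) ?_
        have := hgnorm k
        positivity
      have heqone : (‖g k‖⁻¹)^2 * ((1/((k:ℝ)+1)) * ‖g k‖^2) = 1/((k:ℝ)+1) := by
        have hpos0 : (0:ℝ) < ‖g k‖ := lt_of_le_of_ne (norm_nonneg _) (Ne.symm (hgnorm k))
        have hkpos : (0:ℝ) < (k:ℝ)+1 := by positivity
        field_simp
      rw [hnorm k] at hd1
      rw [hd2] at hd1
      rw [heqone] at hlt2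
      nlinarith
    obtain ⟨φ, w, hφ, hw⟩ := weak_seq_compact h (fun k => (hnorm k).le)
    have hQlim : Tendsto (fun k => Q ubar (h (φ k))) atTop (𝓝 (Q ubar w)) :=
      hQcont (fun _ => ubar) ubar (fun k => h (φ k)) w (fun _ => hubarO) hubarO
        tendsto_const_nhds hw
    have hfrac : ∀ k : ℕ, (1:ℝ)/((φ k : ℝ)+1) ≤ 1/((k:ℝ)+1) := by
      intro k
      refine one_div_le_one_div_of_le (by positivity) ?_
      have : k ≤ φ k := hφ.le_apply
      exact_mod_cast Nat.succ_le_succ this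
    have hQw : Q ubar w ≤ -α := by
      have h1 : Tendsto (fun k : ℕ => -α + 1/((k:ℝ)+1)) atTop (𝓝 (-α + 0)) :=
        tendsto_const_nhds.add tendsto_one_div_add_atTop_nhds_zero_nat
      rw [add_zero] at h1
      refine le_of_tendsto_of_tendsto' hQlim h1 (fun k => ?_)
      have h2 := hkey (φ k)
      have h3 := hfrac k
      linarith
    have hQ0 : Q ubar (0 : Ld d (volume.restrict Ω)) = 0 := by
      have := hdecomp ubar hubarO 0
      simp at this
      linarith
    have hwne : w ≠ 0 := by
      intro h0
      rw [h0, hQ0] at hQw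
      linarith
    have hwnorm : ‖w‖ ≤ 1 := by
      have h1 : Tendsto (fun k => (⟪w, h (φ k)⟫ : ℝ)) atTop (𝓝 (⟪w, w⟫ : ℝ)) := hw w
      have h2 : ‖w‖^2 ≤ ‖w‖ := by
        rw [← real_inner_self_eq_norm_sq]
        refine le_of_tendsto h1 (Eventually.of_forall fun k => ?_)
        calc (⟪w, h (φ k)⟫ : ℝ) ≤ |(⟪w, h (φ k)⟫ : ℝ)| := le_abs_self _
          _ ≤ ‖w‖ * ‖h (φ k)‖ := abs_real_inner_le_norm _ _
          _ = ‖w‖ := by rw [hnorm, mul_one]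
      nlinarith [norm_nonneg w]
    -- measure-theoretic part: w belongs to the critical cone
    have hmeasg : ∀ (q : Ld d (volume.restrict Ω)) (i : Fin d), Measurable fun x => q x i := fun q i =>
      ((EuclideanSpace.proj (𝕜 := ℝ) i).continuous.comp_stronglyMeasurable
        (Lp.stronglyMeasurable q)).measurable
    have hintc : ∀ (q : Ld d (volume.restrict Ω)) (i : Fin d), Integrable (fun x => q x i) (volume.restrict Ω) := by
      intro q i
      have h1 : MemLp (fun x => q x i) 2 (volume.restrict Ω) :=
        (EuclideanSpace.proj (𝕜 := ℝ) i).comp_memLp' (Lp.memLp q)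
      exact h1.integrable (by norm_num)
    have htest : ∀ (s : Set (EuclideanSpace ℝ (Fin d))) (hs : MeasurableSet s) (i : Fin d),
        Tendsto (fun k => ∫ x in s, h (φ k) x i ∂(volume.restrict Ω)) atTop (𝓝 (∫ x in s, w x i ∂(volume.restrict Ω))) := by
      intro s hs i
      have hμs : (volume.restrict Ω) s ≠ ∞ := measure_ne_top (volume.restrict Ω) s
      have heq : ∀ q : Ld d (volume.restrict Ω),
          (⟪indicatorConstLp 2 hs hμs (EuclideanSpace.single i (1:ℝ)), q⟫ : ℝ)
            = ∫ x in s, q x i ∂(volume.restrict Ω) := by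
        intro q
        rw [MeasureTheory.L2.inner_indicatorConstLp_eq_setIntegral_inner]
        congr 1
        ext x
        simp [EuclideanSpace.inner_single_left]
      have := hw (indicatorConstLp 2 hs hμs (EuclideanSpace.single i (1:ℝ)))
      rw [heq w] at this
      simp only [heq] at this
      exact this
    have hae_nonneg : ∀ (f : EuclideanSpace ℝ (Fin d) → ℝ), Integrable f (volume.restrict Ω) →
        ∀ (A : Set (EuclideanSpace ℝ (Fin d))), MeasurableSet A →
        (∀ s, MeasurableSet s → 0 ≤ ∫ x in s ∩ A, f x ∂(volume.restrict Ω)) →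
        ∀ᵐ x ∂(volume.restrict Ω), x ∈ A → 0 ≤ f x := by
      intro f hf A hA hS
      have h1 : 0 ≤ᵐ[(volume.restrict Ω).restrict A] f := by
        refine ae_nonneg_of_forall_setIntegral_nonneg hf.restrict (fun s hs _ => ?_)
        rw [Measure.restrict_restrict hs]
        exact hS s hs
      filter_upwards [(ae_restrict_iff' hA).1 h1] with x hx
      intro hxA
      simpa using hx hxA
    have hsignw : AdmissibleSign d (volume.restrict Ω) a b ubar w := by
      have hA : ∀ i : Fin d, ∀ᵐ x ∂(volume.restrict Ω), ubar x i = a i → 0 ≤ w x i := by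
        intro i
        have hAmeas : MeasurableSet {x | ubar x i = a i} :=
          (hmeasg ubar i) (measurableSet_singleton (a i))
        refine hae_nonneg (fun x => w x i) (hintc w i) _ hAmeas (fun s hs => ?_)
        refine ge_of_tendsto (htest (s ∩ {x | ubar x i = a i}) (hs.inter hAmeas) i)
          (Eventually.of_forall fun k => ?_)
        refine setIntegral_nonneg_ae (hs.inter hAmeas) ?_
        filter_upwards [(hmem (φ k)).1] with x hx hxmem
        exact (hx i).1 hxmem.2
      have hB : ∀ i : Fin d, ∀ᵐ x ∂(volume.restrict Ω), ubar x i = b i → w x i ≤ 0 := by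
        intro i
        have hBmeas : MeasurableSet {x | ubar x i = b i} :=
          (hmeasg ubar i) (measurableSet_singleton (b i))
        have := hae_nonneg (fun x => -(w x i)) (hintc w i).neg _ hBmeas (fun s hs => ?_)
        · filter_upwards [this] with x hx hxB
          have := hx hxB
          linarith
        · rw [integral_neg]
          rw [neg_nonneg]
          refine le_of_tendsto (htest (s ∩ {x | ubar x i = b i}) (hs.inter hBmeas) i)
            (Eventually.of_forall fun k => ?_)
          have : ∫ x in s ∩ {x | ubar x i = b i}, h (φ k) x i ∂(volume.restrict Ω)
              = -∫ x in s ∩ {x | ubar x i = b i}, -(h (φ k) x i) ∂(volume.restrict Ω) := by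
            rw [integral_neg, neg_neg]
          rw [this, neg_nonpos]
          refine setIntegral_nonneg_ae (hs.inter hBmeas) ?_
          filter_upwards [(hmem (φ k)).1] with x hx hxmem
          have := (hx i).2 hxmem.2
          linarith
      have := ae_all_iff.2 (fun i => ((hA i).and (hB i)))
      filter_upwards [this] with x hx i
      exact ⟨(hx i).1, (hx i).2⟩
    have hvan : ∀ i : Fin d, ∀ᵐ x ∂(volume.restrict Ω), dbar x i ≠ 0 → w x i = 0 := by
      intro i
      have hBm : ∀ m : ℕ, ∀ᵐ x ∂(volume.restrict Ω), x ∈ {x | 1/((m:ℝ)+1) < |dbar x i|} → w x i = 0 := by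
        intro m
        have hBmeas : MeasurableSet {x | 1/((m:ℝ)+1) < |dbar x i|} :=
          measurableSet_lt measurable_const ((hmeasg dbar i).abs)
        have hzero : ∀ s, MeasurableSet s →
            ∫ x in s ∩ {x | 1/((m:ℝ)+1) < |dbar x i|}, w x i ∂(volume.restrict Ω) = 0 := by
          intro s hs
          refine tendsto_nhds_unique (htest _ (hs.inter hBmeas) i) ?_
          have hev : ∀ᶠ k in atTop,
              ∫ x in s ∩ {x | 1/((m:ℝ)+1) < |dbar x i|}, h (φ k) x i ∂(volume.restrict Ω) = 0 := by
            filter_upwards [eventually_ge_atTop m] with k hk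
            have h1 : (1:ℝ)/((φ k : ℝ)+1) ≤ 1/((m:ℝ)+1) := by
              refine (hfrac k).trans ?_
              refine one_div_le_one_div_of_le (by positivity) ?_
              exact_mod_cast Nat.succ_le_succ hk
            have h2 : ∀ᵐ x ∂(volume.restrict Ω), x ∈ s ∩ {x | 1/((m:ℝ)+1) < |dbar x i|} → h (φ k) x i = 0 := by
              filter_upwards [(hmem (φ k)).2 i] with x hx hxm
              exact hx (lt_of_le_of_lt h1 hxm.2)
            calc ∫ x in s ∩ {x | 1/((m:ℝ)+1) < |dbar x i|}, h (φ k) x i ∂(volume.restrict Ω)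
                = ∫ _x in s ∩ {x | 1/((m:ℝ)+1) < |dbar x i|}, (0:ℝ) ∂(volume.restrict Ω) :=
                  setIntegral_congr_ae (hs.inter hBmeas) (h2.mono fun x hx hxm => hx hxm)
              _ = 0 := integral_zero _ _
          exact Tendsto.congr' (hev.mono fun k hk => hk.symm) tendsto_const_nhds
        have hp := hae_nonneg (fun x => w x i) (hintc w i) _ hBmeas
          (fun s hs => (hzero s hs).ge)
        have hn := hae_nonneg (fun x => -(w x i)) (hintc w i).neg _ hBmeas
          (fun s hs => by rw [integral_neg, hzero s hs, neg_zero])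
        filter_upwards [hp, hn] with x h1 h2 hxB
        have := h1 hxB
        have := h2 hxB
        linarith
      have hall := ae_all_iff.2 hBm
      filter_upwards [hall] with x hx hne
      obtain ⟨m, hm⟩ := exists_nat_one_div_lt (abs_pos.2 hne)
      exact hx m hm
    have hwmem : w ∈ CriticalCone d (volume.restrict Ω) a b ubar dbar := ⟨hsignw, hvan⟩
    have hfinal := hpos w hwmem hwne
    have hd1 := hdecomp ubar hubarO w
    have hsq : ‖w‖^2 ≤ 1 := by nlinarith [norm_nonneg w]
    have : α * ‖w‖^2 ≤ α * 1 := mul_le_mul_of_nonneg_left hsq hα.le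
    linarith
  · -- (b) → (a)
    rintro ⟨μ', hμ', τ, hτ, hineq⟩ g hg hg0
    have hsub : g ∈ CriticalConeTau d (volume.restrict Ω) a b ubar dbar τ := by
      refine ⟨hg.1, fun i => ?_⟩
      filter_upwards [hg.2 i] with x hx hlt
      refine hx (fun h0 => ?_)
      rw [h0, abs_zero] at hlt
      linarith
    have h1 := hineq g hsub
    have h2 : 0 < ‖g‖ := norm_pos_iff.2 hg0
    have h3 : 0 < μ' * ‖g‖^2 := by positivity
    linarith
end
end
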